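/- If a+bη, c+dη are integers of Q(√(-7)) (η=(1+√(-7))/2) and (a+bη)(c+dη) = A + Bη with B = 0, gcd(2a+b, b) = g, and gcd(N(a+bη), N(c+dη)) = 1, then b = d = 0. (Here N(x+yη)=x²+xy+2y².) -/

import Mathlib

theorem product_real_coprime_norms (a b c d : ℤ)
    (hB : a * d + b * c + b * d = 0)
    (hnorm : Int.gcd (a^2 + a * b + 2 * b^2) (c^2 + c * d + 2 * d^2) = 1) :
    b = 0 ∧ d = 0 := by
  have hb : b = 0 := by
    by_contra hb
    set a' : ℤ := 2 * a + b with ha'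
    have hgpos : 0 < Int.gcd a' b := Int.gcd_pos_of_ne_zero_right a' hb
    set g : ℤ := (Int.gcd a' b : ℤ) with hgdef
    have hg0 : g ≠ 0 := by positivity
    set A' : ℤ := a' / g with hA'def
    set B' : ℤ := b / g with hB'def
    have hA' : 2 * a + b = g * A' := by
      rw [hA'def]; rw [Int.mul_ediv_cancel' (Int.gcd_dvd_left _ _)]
    have hB' : b = g * B' := by
      rw [hB'def]; rw [Int.mul_ediv_cancel' (Int.gcd_dvd_right _ _)]
    have hcop : Int.gcd A' B' = 1 := Int.gcd_div_gcd_div_gcd hgpos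
    have hB'0 : B' ≠ 0 := by
      intro h; rw [h, mul_zero] at hB'; exact hb hB'
    -- B = 0 relation
    have hrel : A' * d + (2 * c + d) * B' = 0 := by
      have h2 : g * (A' * d + (2 * c + d) * B') = 0 := by
        linear_combination 2 * hB - d * hA' - (2 * c + d) * hB'
      rcases mul_eq_zero.mp h2 with h | h
      · exact absurd h hg0
      · exact h
    have hdvd : B' ∣ d := by
      have hc : IsCoprime B' A' :=
        (Int.isCoprime_iff_gcd_eq_one.mpr hcop).symm
      have : B' ∣ A' * d := ⟨-(2 * c + d), by linarith⟩
      exact hc.dvd_of_dvd_mul_left this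
    obtain ⟨t, ht⟩ := hdvd
    have hct : 2 * c + d = -(A' * t) := by
      have h2 : B' * ((2 * c + d) + A' * t) = 0 := by
        linear_combination hrel - A' * ht
      rcases mul_eq_zero.mp h2 with h | h
      · exact absurd h hB'0
      · linarith
    set K : ℤ := A' ^ 2 + 7 * B' ^ 2 with hK
    have h1 : K ∣ 4 * (a ^ 2 + a * b + 2 * b ^ 2) := by
      refine ⟨g ^ 2, ?_⟩
      linear_combination (2 * a + b + g * A') * hA' + (7 * b + 7 * g * B') * hB'
    have h2 : K ∣ 4 * (c ^ 2 + c * d + 2 * d ^ 2) := by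
      refine ⟨t ^ 2, ?_⟩
      linear_combination (2 * c + d - A' * t) * hct + (7 * d + 7 * B' * t) * ht
    have hK4 : K ∣ (4 : ℤ) := by
      have := Int.dvd_coe_gcd h1 h2
      rwa [Int.gcd_mul_left, hnorm, mul_one] at this
      -- Int.gcd (4*x) (4*y) = (4:ℤ).natAbs * gcd x y
    have hKle : K ≤ 4 := Int.le_of_dvd (by norm_num) hK4
    have hb2 : 1 ≤ B' ^ 2 := by
      rcases lt_or_gt_of_ne hB'0 with h | h <;> nlinarith
    nlinarith [sq_nonneg A']
  subst hb
  refine ⟨rfl, ?_⟩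
  simp only [mul_zero, zero_mul, add_zero, zero_add] at hB
  rcases mul_eq_zero.mp hB with ha | hd
  · subst ha
    simp only [ne_eq, OfNat.ofNat_ne_zero, not_false_eq_true, zero_pow, zero_mul,
      mul_zero, add_zero, zero_add, Int.gcd, Int.natAbs_zero, Nat.gcd_zero_left] at hnorm
    by_contra hd
    have h2 : 1 ≤ d ^ 2 := by
      rcases lt_or_gt_of_ne hd with h | h <;> nlinarith
    have := Int.natAbs_eq (c ^ 2 + c * d + 2 * d ^ 2)
    rw [hnorm] at this
    push_cast at this
    rcases this with h | h <;> nlinarith [sq_nonneg (2 * c + d)]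
  · exact hd
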